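/- Let Γ be a finite simple graph and let u and v be distinct adjacent vertices of Γ. If u and v are adjacent to exactly the same set of vertices in VΓ \ {u, v}, then Lights Out is not universally solvable on Γ (i.e., the neighborhood matrix of Γ over 𝔽₂ is not invertible). -/
import Mathlib


open scoped Classical in
/-- The neighborhood matrix of a finite simple graph over the field `ZMod 2`:
the entry at `(i, j)` is `1` if `i = j` or `i` and `j` are adjacent, and `0` otherwise. -/
noncomputable def nbhdMatrix {V : Type} [Fintype V] [DecidableEq V] (G : SimpleGraph V) :
    Matrix V V (ZMod 2) :=
  Matrix.of fun i j => if i = j ∨ G.Adj i j then 1 else 0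

/-- Lights Out is universally solvable on a finite simple graph iff its neighborhood
matrix over `ZMod 2` is invertible. -/
def UniversallySolvable {V : Type} [Fintype V] [DecidableEq V] (G : SimpleGraph V) : Prop :=
  IsUnit (nbhdMatrix G)

/-- If distinct adjacent vertices `u` and `v` of a finite simple graph `Γ` are adjacent to
exactly the same set of vertices in `VΓ \ {u, v}`, then Lights Out is not universally
solvable on `Γ`. -/
theorem not_universallySolvable_of_same_adjacency {V : Type} [Fintype V] [DecidableEq V]
    (G : SimpleGraph V) (u v : V) (huv : u ≠ v) (hadj : G.Adj u v)
    (hsame : ∀ w : V, w ≠ u → w ≠ v → (G.Adj u w ↔ G.Adj v w)) :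
    ¬ UniversallySolvable G := by
  intro h
  set M := nbhdMatrix G with hM
  have hrow : ∀ w, M u w = M v w := by
    intro w
    by_cases hwu : w = u
    · subst hwu
      simp [hM, nbhdMatrix, hadj.symm]
    · by_cases hwv : w = v
      · subst hwv
        simp [hM, nbhdMatrix, hadj]
      · simp only [hM, nbhdMatrix, Matrix.of_apply]
        have := hsame w hwu hwv
        have h1 : (u = w ∨ G.Adj u w) ↔ (v = w ∨ G.Adj v w) := by
          constructor
          · rintro (rfl | ha)
            · exact absurd rfl hwu
            · exact Or.inr (this.mp ha)
          · rintro (rfl | ha)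
            · exact absurd rfl hwv
            · exact Or.inr (this.mpr ha)
        by_cases hc : u = w ∨ G.Adj u w
        · rw [if_pos hc, if_pos (h1.mp hc)]
        · rw [if_neg hc, if_neg (fun hc' => hc (h1.mpr hc'))]
  obtain ⟨N, hN⟩ := h.exists_right_inv
  have h1 : (M * N) u u = 1 := by rw [hN]; simp
  have h0 : (M * N) v u = 0 := by rw [hN]; simp [Matrix.one_apply, huv.symm]
  have : (M * N) u u = (M * N) v u := by
    simp only [Matrix.mul_apply]
    exact Finset.sum_congr rfl fun k _ => by rw [hrow k]
  rw [h1, h0] at this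
  exact one_ne_zero this
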